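/- Let A, B ⊆ ℝ² be finite nonempty sets such that p₁ < q₁ for every p ∈ A and q ∈ B, such that all points of A ∪ B have pairwise distinct x-coordinates, and such that no three distinct points of A ∪ B are collinear. If (a, b) ∈ A × B and (a', b') ∈ A × B are both bridges of (A, B), then a = a' and b = b'. (The bridge between two vertically separated point sets is unique.) -/

import Mathlib

/-- `(a, b) ∈ A × B` is a bridge of `(A, B)`: every point of `A ∪ B` lies on or
below the line through `a` and `b`. -/
def IsBridge (A B : Set (ℝ × ℝ)) (a b : ℝ × ℝ) : Prop :=
  a ∈ A ∧ b ∈ B ∧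
    ∀ p ∈ A ∪ B, (p.2 - a.2) * (b.1 - a.1) ≤ (b.2 - a.2) * (p.1 - a.1)

lemma collinear_of_det (p q r : ℝ × ℝ) (h1 : p.1 ≠ q.1)
    (h : (q.1 - p.1) * (r.2 - p.2) = (q.2 - p.2) * (r.1 - p.1)) :
    Collinear ℝ ({p, q, r} : Set (ℝ × ℝ)) := by
  have hq : q.1 - p.1 ≠ 0 := sub_ne_zero.mpr h1.symm
  rw [collinear_iff_of_mem (Set.mem_insert p _)]
  refine ⟨q - p, fun x hx => ?_⟩
  have key : ∀ _ : (q.1 - p.1) * (x.2 - p.2) = (q.2 - p.2) * (x.1 - p.1),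
      x = ((x.1 - p.1)/(q.1 - p.1)) • (q - p) +ᵥ p := by
    intro hc
    simp only [vadd_eq_add, Prod.ext_iff, Prod.smul_fst, Prod.smul_snd, Prod.fst_add,
      Prod.snd_add, Prod.fst_sub, Prod.snd_sub, smul_eq_mul]
    constructor
    · field_simp
      ring
    · field_simp
      linear_combination hc
  rcases hx with rfl | rfl | rfl
  · exact ⟨0, by simp⟩
  · exact ⟨1, by simp⟩
  · exact ⟨_, key h⟩

lemma no_cross {a b a' b' : ℝ × ℝ}
    (hu : a.1 < a'.1) (hv : a'.1 < b.1) (hD : a'.1 < b'.1)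
    (hf : (a'.2 - a.2) * (b.1 - a.1) < (b.2 - a.2) * (a'.1 - a.1))
    (hga : (a.2 - a'.2) * (b'.1 - a'.1) < (b'.2 - a'.2) * (a.1 - a'.1))
    (hgb : (b.2 - a'.2) * (b'.1 - a'.1) < (b'.2 - a'.2) * (b.1 - a'.1)) : False := by
  have hu' : (0:ℝ) < a'.1 - a.1 := by linarith
  have hv' : (0:ℝ) < b.1 - a'.1 := by linarith
  have hD' : (0:ℝ) < b'.1 - a'.1 := by linarith
  nlinarith [mul_lt_mul_of_pos_left hga hv', mul_lt_mul_of_pos_left hgb hu',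
    mul_lt_mul_of_pos_right hf hD']

/-- Under general position (pairwise distinct `x`-coordinates and no three distinct
collinear points), the bridge between two vertically separated finite nonempty sets
is unique. -/
theorem bridge_unique (A B : Set (ℝ × ℝ)) (hA : A.Finite) (hB : B.Finite)
    (hAne : A.Nonempty) (hBne : B.Nonempty)
    (hsep : ∀ p ∈ A, ∀ q ∈ B, p.1 < q.1)
    (hx : ∀ p ∈ A ∪ B, ∀ q ∈ A ∪ B, p.1 = q.1 → p = q)
    (hcol : ∀ p ∈ A ∪ B, ∀ q ∈ A ∪ B, ∀ r ∈ A ∪ B,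
      p ≠ q → q ≠ r → p ≠ r → ¬ Collinear ℝ ({p, q, r} : Set (ℝ × ℝ)))
    {a b a' b' : ℝ × ℝ}
    (hab : IsBridge A B a b) (hab' : IsBridge A B a' b') :
    a = a' ∧ b = b' := by
  obtain ⟨ha, hb, hle⟩ := hab
  obtain ⟨ha', hb', hle'⟩ := hab'
  have haU : a ∈ A ∪ B := Or.inl ha
  have ha'U : a' ∈ A ∪ B := Or.inl ha'
  have hbU : b ∈ A ∪ B := Or.inr hb
  have hb'U : b' ∈ A ∪ B := Or.inr hb'
  have hab1 : a.1 < b.1 := hsep a ha b hb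
  have hab1' : a'.1 < b'.1 := hsep a' ha' b' hb'
  have hab1'' : a.1 < b'.1 := hsep a ha b' hb'
  have ha'b1 : a'.1 < b.1 := hsep a' ha' b hb
  -- strict version of the bridge inequality for (a,b)
  have strict : ∀ c d : ℝ × ℝ, c ∈ A ∪ B → d ∈ A ∪ B → c.1 < d.1 →
      (∀ p ∈ A ∪ B, (p.2 - c.2) * (d.1 - c.1) ≤ (d.2 - c.2) * (p.1 - c.1)) →
      ∀ p ∈ A ∪ B, p ≠ c → p ≠ d →
      (p.2 - c.2) * (d.1 - c.1) < (d.2 - c.2) * (p.1 - c.1) := by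
    intro c d hc hd hcd hL p hp hpc hpd
    rcases lt_or_eq_of_le (hL p hp) with h | h
    · exact h
    · exfalso
      have hcd1 : c.1 ≠ d.1 := ne_of_lt hcd
      have hcdne : c ≠ d := fun h' => hcd1 (by rw [h'])
      exact hcol c hc d hd p hp hcdne hpd.symm (Ne.symm hpc)
        (collinear_of_det c d p hcd1 (by linarith [h]))
  have key : ∀ c : ℝ × ℝ, c ∈ A ∪ B → ∀ p ∈ A ∪ B, p ≠ c → p.1 = c.1 → False := by
    intro c hc p hp hpc hpc1
    exact hpc (hx p hp c hc hpc1)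
  have haa' : a = a' := by
    by_contra hne
    have hne : a ≠ a' := hne
    have hne1 : a.1 ≠ a'.1 := fun h => hne (hx a haU a' ha'U h)
    have hnab : a ≠ b := fun h => (ne_of_lt hab1) (by rw [h])
    have hnab' : a ≠ b' := fun h => (ne_of_lt hab1'') (by rw [h])
    have hna'b : a' ≠ b := fun h => (ne_of_lt ha'b1) (by rw [h])
    have hna'b' : a' ≠ b' := fun h => (ne_of_lt hab1') (by rw [h])
    by_cases hbb' : b = b'
    · -- common right endpoint: two strict inequalities that are negatives of each other
      subst hbb'
      have h1 := strict a b haU hbU hab1 hle a' ha'U hne.symm hna'b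
      have h2 := strict a' b ha'U hbU ha'b1 (fun p hp => by
        simpa [ ] using hle' p hp) a haU hne hnab
      nlinarith [h1, h2]
    · rcases lt_or_gt_of_ne hne1 with hlt | hgt
      · exact no_cross hlt ha'b1 hab1'
          (strict a b haU hbU hab1 hle a' ha'U hne.symm hna'b)
          (strict a' b' ha'U hb'U hab1' hle' a haU hne hnab')
          (strict a' b' ha'U hb'U hab1' hle' b hbU hna'b.symm hbb')
      · exact no_cross hgt hab1'' hab1
          (strict a' b' ha'U hb'U hab1' hle' a haU hne hnab')
          (strict a b haU hbU hab1 hle a' ha'U hne.symm hna'b)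
          (strict a b haU hbU hab1 hle b' hb'U (Ne.symm hnab') (Ne.symm hbb'))
  subst haa'
  refine ⟨rfl, ?_⟩
  by_contra hbb'
  have hnab : a ≠ b := fun h => (ne_of_lt hab1) (by rw [h])
  have hnab' : a ≠ b' := fun h => (ne_of_lt hab1') (by rw [h])
  have h1 := strict a b haU hbU hab1 hle b' hb'U hnab'.symm (Ne.symm hbb')
  have h2 := strict a b' haU hb'U hab1' hle' b hbU hnab.symm hbb'
  nlinarith [h1, h2]
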